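/- Let M ≥ 1 and R ≥ 1 be natural numbers, let d : Fin M → ℕ assign a dimension to each mode, and let A : (∏_{m∈Fin M} Fin (d m)) → ℝ be a tensor with at most R nonzero entries. Then there exist component tensors G, where for each m ∈ Fin M and each i ∈ Fin (d m), G m i is an R×R real matrix, such that for every multi-index i one has A(i) = ( G 0 (i 0) · G 1 (i 1) · ⋯ · G (M−1) (i (M−1)) )_{0,0}, i.e. A admits a tensor train representation with all ranks bounded by R. Moreover, the components can be chosen so that for each mode m the total number of nonzero entries of the family (G m i)_{i ∈ Fin (d m)} is at most R. -/

import Mathlib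

open scoped BigOperators

lemma sttr_ncard_le {α : Type*} {R : ℕ} (s : Set α) (g : α → Fin R)
    (h : Set.InjOn g s) : s.ncard ≤ R := by
  calc s.ncard = (g '' s).ncard := (Set.ncard_image_of_injOn h).symm
    _ ≤ (Set.univ : Set (Fin R)).ncard :=
        Set.ncard_le_ncard (Set.subset_univ _) Set.finite_univ
    _ = R := by simp [Set.ncard_univ]

lemma sttr_diag_prod {R : ℕ} (n : ℕ) (g : Fin n → Fin R → ℝ) :
    (List.ofFn fun j => Matrix.diagonal (g j)).prod
      = Matrix.diagonal (fun k => ∏ j, g j k) := by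
  induction n with
  | zero =>
      simp only [List.ofFn_zero, List.prod_nil, Fin.prod_univ_zero]
      exact Matrix.diagonal_one.symm
  | succ n ih =>
      rw [List.ofFn_succ, List.prod_cons, ih, Matrix.diagonal_mul_diagonal]
      funext k
      simp [Fin.prod_univ_succ]

lemma sttr_fin_cases {n : ℕ} (m : Fin (n + 2)) :
    m = 0 ∨ m = Fin.last (n + 1) ∨ ∃ j : Fin n, m = j.castSucc.succ := by
  rcases Fin.eq_zero_or_eq_succ m with rfl | ⟨m1, rfl⟩
  · left; rfl
  · rcases Fin.eq_castSucc_or_eq_last m1 with ⟨m2, rfl⟩ | rfl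
    · right; right; exact ⟨m2, rfl⟩
    · right; left; exact Fin.succ_last n

theorem sparse_tensor_train_representation
    (M R : ℕ) (hM : 0 < M) (hR : 0 < R)
    (d : Fin M → ℕ)
    (A : (∀ m : Fin M, Fin (d m)) → ℝ)
    (hA : {i : ∀ m : Fin M, Fin (d m) | A i ≠ 0}.ncard ≤ R) :
    ∃ G : ∀ m : Fin M, Fin (d m) → Matrix (Fin R) (Fin R) ℝ,
      (∀ i : ∀ m : Fin M, Fin (d m),
        A i = (List.ofFn fun m : Fin M => G m (i m)).prod ⟨0, hR⟩ ⟨0, hR⟩) ∧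
      (∀ m : Fin M,
        {p : Fin (d m) × Fin R × Fin R | G m p.1 p.2.1 p.2.2 ≠ 0}.ncard ≤ R) := by
  classical
  obtain ⟨n, rfl⟩ : ∃ n, M = n + 1 := ⟨M - 1, (Nat.succ_pred_eq_of_pos hM).symm⟩
  clear hM
  set z : Fin R := ⟨0, hR⟩ with hz
  -- an injection from the support into Fin R
  set S : Set (∀ m, Fin (d m)) := {i | A i ≠ 0} with hS
  haveI : Fintype ↥S := Fintype.ofFinite ↥S
  have hcard : Fintype.card ↥S ≤ Fintype.card (Fin R) := by
    rw [Fintype.card_fin, ← Nat.card_eq_fintype_card, Nat.card_coe_set_eq]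
    exact hA
  obtain ⟨e⟩ := Function.Embedding.nonempty_of_card_le hcard
  set f : (∀ m, Fin (d m)) → Fin R := fun j => if h : A j ≠ 0 then e ⟨j, h⟩ else z with hfdef
  have hf : ∀ ⦃a⦄, A a ≠ 0 → ∀ ⦃b⦄, A b ≠ 0 → f a = f b → a = b := by
    intro a ha b hb hab
    rw [hfdef] at hab
    simp only [dif_pos ha, dif_pos hb] at hab
    exact Subtype.mk.injEq .. ▸ (e.injective hab)
  rcases n with _ | n
  · -- M = 1
    refine ⟨fun m x => Matrix.of fun k l =>
        if k = z ∧ l = z then (∑ j, if j m = x then A j else 0) else 0,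
      ?_, ?_⟩
    · intro i
      rw [List.ofFn_succ, List.ofFn_zero, List.prod_cons, List.prod_nil, mul_one]
      have : ∀ j, j ≠ i → (if j (0 : Fin 1) = i 0 then A j else 0) = 0 := by
        intro j hj
        rw [if_neg]
        intro h
        exact hj (funext fun m => by rw [Fin.eq_zero m]; exact h)
      beta_reduce
      rw [Matrix.of_apply, if_pos ⟨rfl, rfl⟩,
        Finset.sum_eq_single_of_mem i (Finset.mem_univ i) (fun j _ hj => this j hj), if_pos rfl]
    · intro m
      apply sttr_ncard_le _ (fun p : Fin (d m) × Fin R × Fin R =>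
        if h : ∃ j, A j ≠ 0 ∧ j m = p.1 then f h.choose else z)
      intro p hp q hq hpq
      have key : ∀ r : Fin (d m) × Fin R × Fin R,
          (if r.2.1 = z ∧ r.2.2 = z then (∑ j, if j m = r.1 then A j else 0) else 0) ≠ 0 →
          r.2.1 = z ∧ r.2.2 = z ∧ ∃ j, A j ≠ 0 ∧ j m = r.1 := by
        intro r hr
        by_cases hc : r.2.1 = z ∧ r.2.2 = z
        · rw [if_pos hc] at hr
          obtain ⟨j, -, hj⟩ := Finset.exists_ne_zero_of_sum_ne_zero hr
          by_cases hjm : j m = r.1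
          · exact ⟨hc.1, hc.2, j, by rwa [if_pos hjm] at hj, hjm⟩
          · rw [if_neg hjm] at hj; exact absurd rfl hj
        · rw [if_neg hc] at hr; exact absurd rfl hr
      obtain ⟨h1p, h2p, hexp⟩ := key p hp
      obtain ⟨h1q, h2q, hexq⟩ := key q hq
      simp only [dif_pos hexp, dif_pos hexq] at hpq
      have hjj := hf hexp.choose_spec.1 hexq.choose_spec.1 hpq
      have h1 : p.1 = q.1 := by
        rw [← hexp.choose_spec.2, ← hexq.choose_spec.2, hjj]
      exact Prod.ext h1 (Prod.ext (h1p.trans h1q.symm) (h2p.trans h2q.symm))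
  · -- M = n + 2
    set lastM : Fin (n + 2) := Fin.last (n + 1) with hlastM
    have hlast0 : lastM ≠ 0 := by
      simp [hlastM, Fin.ext_iff]
    set Q : ∀ m : Fin (n + 2), Fin (d m) → Fin R → Prop :=
      fun m x k => ∃ j, A j ≠ 0 ∧ f j = k ∧ j m = x with hQ
    set G : ∀ m : Fin (n + 2), Fin (d m) → Matrix (Fin R) (Fin R) ℝ := fun m x k l =>
      if m = 0 then
        (if k = z then (∑ j, if f j = l ∧ j m = x then A j else 0) else 0)
      else if m = lastM then
        (if l = z ∧ Q m x k then 1 else 0)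
      else
        (if k = l ∧ Q m x k then 1 else 0) with hGdef
    have hG0 : ∀ (x : Fin (d 0)) k l, G 0 x k l
        = if k = z then (∑ j, if f j = l ∧ j 0 = x then A j else 0) else 0 := by
      intro x k l
      rw [hGdef]
      beta_reduce
      rw [if_pos rfl]
    have hGlastE : ∀ (x : Fin (d lastM)) k l, G lastM x k l
        = if l = z ∧ Q lastM x k then 1 else 0 := by
      intro x k l
      rw [hGdef]
      beta_reduce
      rw [if_neg hlast0, if_pos rfl]
    have hmidlast : ∀ j : Fin n, (j.castSucc.succ : Fin (n + 2)) ≠ lastM := by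
      intro j h
      have h2 := congrArg Fin.val h
      have h3 := j.isLt
      simp only [Fin.val_succ, Fin.coe_castSucc, hlastM, Fin.val_last] at h2
      omega
    have hGmidE : ∀ (j : Fin n) (x : Fin (d j.castSucc.succ)),
        G j.castSucc.succ x
          = Matrix.diagonal (fun k => if Q j.castSucc.succ x k then (1 : ℝ) else 0) := by
      intro j x
      funext k l
      rw [hGdef]
      beta_reduce
      rw [if_neg (Fin.succ_ne_zero _), if_neg (hmidlast j), Matrix.diagonal_apply]
      by_cases hkl : k = l
      · subst hkl
        by_cases hq : Q j.castSucc.succ x k <;> simp [hq]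
      · simp [hkl]
    refine ⟨G, ?_, ?_⟩
    · intro i
      set Dv : Fin R → ℝ :=
        fun k => ∏ j : Fin n, if Q j.castSucc.succ (i j.castSucc.succ) k then (1 : ℝ) else 0
        with hDvdef
      set c : Fin R → ℝ := fun k => Dv k * (if Q lastM (i lastM) k then 1 else 0) with hcdef
      have hlist : (List.ofFn fun m : Fin (n + 2) => G m (i m))
          = G 0 (i 0) ::
            ((List.ofFn fun j : Fin n => G j.castSucc.succ (i j.castSucc.succ))
              ++ [G lastM (i lastM)]) := by
        rw [List.ofFn_succ, List.ofFn_succ', List.concat_eq_append, Fin.succ_last]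
      have hD : (List.ofFn fun j : Fin n => G j.castSucc.succ (i j.castSucc.succ)).prod
          = Matrix.diagonal Dv := by
        have h1 : (fun j : Fin n => G j.castSucc.succ (i j.castSucc.succ))
            = fun j : Fin n => Matrix.diagonal
                (fun k => if Q j.castSucc.succ (i j.castSucc.succ) k then (1 : ℝ) else 0) :=
          funext fun j => hGmidE j _
        rw [h1, sttr_diag_prod]
      have hterm : ∀ j, (∑ k, (if f j = k ∧ j 0 = i 0 then A j else 0) * c k)
          = if j = i then A j else 0 := by
        intro j
        rw [Finset.sum_eq_single (f j) (fun k _ hk => by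
            rw [if_neg (fun hcon => hk (hcon.1.symm)), zero_mul])
          (fun h => absurd (Finset.mem_univ _) h)]
        by_cases hAj : A j = 0
        · simp [hAj]
        · have hQj : ∀ (m : Fin (n + 2)) (x : Fin (d m)), Q m x (f j) ↔ j m = x := by
            intro m x
            constructor
            · rintro ⟨j', hj'0, hj'f, hj'm⟩
              rwa [hf hj'0 hAj hj'f] at hj'm
            · intro h
              exact ⟨j, hAj, rfl, h⟩
          by_cases hji : j = i
          · subst hji
            have hc1 : c (f j) = 1 := by
              simp [hcdef, hDvdef, hQj]
            simp [hc1]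
          · rw [if_neg hji]
            have hne : ¬ ∀ m, j m = i m := fun h => hji (funext h)
            push_neg at hne
            obtain ⟨m0, hm0⟩ := hne
            rcases sttr_fin_cases m0 with rfl | rfl | ⟨jj, rfl⟩
            · rw [if_neg (fun hcon => hm0 hcon.2), zero_mul]
            · have hc0 : c (f j) = 0 := by
                have hq : ¬ Q lastM (i lastM) (f j) := fun h => hm0 ((hQj _ _).1 h)
                simp [hcdef, hq]
              rw [hc0, mul_zero]
            · have hd0 : Dv (f j) = 0 := by
                simp only [hDvdef]
                exact Finset.prod_eq_zero (Finset.mem_univ jj)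
                  (if_neg (fun h => hm0 ((hQj _ _).1 h)))
              have hc0 : c (f j) = 0 := by
                simp [hcdef, hd0]
              rw [hc0, mul_zero]
      have hcfold : ∀ k, Dv k * (if Q lastM (i lastM) k then (1 : ℝ) else 0) = c k :=
        fun k => rfl
      rw [hlist, List.prod_cons, List.prod_append, List.prod_singleton, hD, Matrix.mul_apply]
      simp only [Matrix.diagonal_mul]
      simp only [hG0, hGlastE, if_pos rfl, true_and, eq_self_iff_true, if_true]
      simp only [hcfold, Finset.sum_mul]
      rw [Finset.sum_comm]
      rw [Finset.sum_congr rfl (fun j _ => hterm j)]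
      simp
    · intro m
      rcases sttr_fin_cases m with rfl | rfl | ⟨jj, rfl⟩
      · apply sttr_ncard_le _ (fun p : Fin (d 0) × Fin R × Fin R => p.2.2)
        intro p hp q hq hpq0
        have hpq : p.2.2 = q.2.2 := hpq0
        have key : ∀ r : Fin (d 0) × Fin R × Fin R, G 0 r.1 r.2.1 r.2.2 ≠ 0 →
            r.2.1 = z ∧ ∃ j, A j ≠ 0 ∧ f j = r.2.2 ∧ j 0 = r.1 := by
          intro r hr
          rw [hG0] at hr
          by_cases hk : r.2.1 = z
          · rw [if_pos hk] at hr
            obtain ⟨j, -, hj⟩ := Finset.exists_ne_zero_of_sum_ne_zero hr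
            by_cases hc : f j = r.2.2 ∧ j 0 = r.1
            · rw [if_pos hc] at hj
              exact ⟨hk, j, hj, hc.1, hc.2⟩
            · rw [if_neg hc] at hj
              exact absurd rfl hj
          · rw [if_neg hk] at hr
            exact absurd rfl hr
        obtain ⟨h1p, jp, hjp0, hjpf, hjpv⟩ := key p hp
        obtain ⟨h1q, jq, hjq0, hjqf, hjqv⟩ := key q hq
        have hjj : jp = jq := hf hjp0 hjq0 (by rw [hjpf, hjqf, hpq])
        exact Prod.ext (by rw [← hjpv, ← hjqv, hjj])
          (Prod.ext (h1p.trans h1q.symm) hpq)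
      · apply sttr_ncard_le _ (fun p : Fin (d lastM) × Fin R × Fin R => p.2.1)
        intro p hp q hq hpq0
        have hpq : p.2.1 = q.2.1 := hpq0
        have key : ∀ r : Fin (d lastM) × Fin R × Fin R, G lastM r.1 r.2.1 r.2.2 ≠ 0 →
            r.2.2 = z ∧ ∃ j, A j ≠ 0 ∧ f j = r.2.1 ∧ j lastM = r.1 := by
          intro r hr
          rw [hGlastE] at hr
          by_cases hc : r.2.2 = z ∧ Q lastM r.1 r.2.1
          · exact ⟨hc.1, hc.2⟩
          · rw [if_neg hc] at hr
            exact absurd rfl hr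
        obtain ⟨h1p, jp, hjp0, hjpf, hjpv⟩ := key p hp
        obtain ⟨h1q, jq, hjq0, hjqf, hjqv⟩ := key q hq
        have hjj : jp = jq := hf hjp0 hjq0 (by rw [hjpf, hjqf, hpq])
        exact Prod.ext (by rw [← hjpv, ← hjqv, hjj])
          (Prod.ext hpq (h1p.trans h1q.symm))
      · apply sttr_ncard_le _
          (fun p : Fin (d jj.castSucc.succ) × Fin R × Fin R => p.2.1)
        intro p hp q hq hpq0
        have hpq : p.2.1 = q.2.1 := hpq0
        have key : ∀ r : Fin (d jj.castSucc.succ) × Fin R × Fin R,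
            G jj.castSucc.succ r.1 r.2.1 r.2.2 ≠ 0 →
            r.2.1 = r.2.2 ∧ ∃ j, A j ≠ 0 ∧ f j = r.2.1 ∧ j jj.castSucc.succ = r.1 := by
          intro r hr
          rw [hGmidE] at hr
          rw [Matrix.diagonal_apply] at hr
          by_cases hkl : r.2.1 = r.2.2
          · rw [if_pos hkl] at hr
            by_cases hq2 : Q jj.castSucc.succ r.1 r.2.1
            · exact ⟨hkl, hq2⟩
            · rw [if_neg hq2] at hr
              exact absurd rfl hr
          · rw [if_neg hkl] at hr
            exact absurd rfl hr
        obtain ⟨h1p, jp, hjp0, hjpf, hjpv⟩ := key p hp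
        obtain ⟨h1q, jq, hjq0, hjqf, hjqv⟩ := key q hq
        have hjj2 : jp = jq := hf hjp0 hjq0 (by rw [hjpf, hjqf, hpq])
        exact Prod.ext (by rw [← hjpv, ← hjqv, hjj2])
          (Prod.ext hpq ((h1p.symm.trans hpq).trans h1q))
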